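/- arXiv:1904.01543 — 5 statements merged into one kernel-verified Lean document; each statement's English description precedes it below -/
import Mathlib

section
/- For any finite graph G and any k ≥ 2, if two k-tuples of vertices receive the same color under the δ-k-WL coloring at iteration i (which records local/global flags for each neighbor substitution), then they receive the same color under the k-WL coloring at iteration i. Consequently, the δ-k-WL distinguishes every pair of non-isomorphic graphs that the k-WL distinguishes. -/
/-- Base color: ordered isomorphism type of the induced subgraph on a `k`-tuple. -/
def Base (k : ℕ) : Type := Fin k → Fin k → Bool × Bool

instance (k : ℕ) : DecidableEq (Base k) := by unfold Base; infer_instance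

def atp {V : Type} [DecidableEq V] (G : SimpleGraph V) [DecidableRel G.Adj] {k : ℕ}
    (v : Fin k → V) : Base k :=
  fun i j => (decide (v i = v j), decide (G.Adj (v i) (v j)))

/-- Color domain of the `k`-WL at iteration `i`. -/
def ColT (k : ℕ) : ℕ → Type
  | 0 => Base k
  | i+1 => ColT k i × Multiset (Fin k → ColT k i)

def kWL {V : Type} [Fintype V] [DecidableEq V] (G : SimpleGraph V) [DecidableRel G.Adj] {k : ℕ} :
    (i : ℕ) → (Fin k → V) → ColT k i
  | 0, v => atp G v
  | i+1, v => (kWL G i v,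
      (Finset.univ.val : Multiset V).map (fun w => fun j => kWL G i (Function.update v j w)))

/-- Color domain of the δ-k-WL at iteration `i`. -/
def ColTd (k : ℕ) : ℕ → Type
  | 0 => Base k
  | i+1 => ColTd k i × Multiset (Fin k → ColTd k i × Bool)

def dkWL {V : Type} [Fintype V] [DecidableEq V] (G : SimpleGraph V) [DecidableRel G.Adj] {k : ℕ} :
    (i : ℕ) → (Fin k → V) → ColTd k i
  | 0, v => atp G v
  | i+1, v => (dkWL G i v,
      (Finset.univ.val : Multiset V).map (fun w => fun j =>
        (dkWL G i (Function.update v j w), decide (G.Adj (v j) w))))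

/-- Color domain of the local δ-k-LWL at iteration `i`. -/
def ColTL (k : ℕ) : ℕ → Type
  | 0 => Base k
  | i+1 => ColTL k i × Multiset (Finset (ColTL k i × Fin k))

def colTLDecEq (k : ℕ) : (i : ℕ) → DecidableEq (ColTL k i)
  | 0 => inferInstanceAs (DecidableEq (Base k))
  | i+1 => letI := colTLDecEq k i
           inferInstanceAs (DecidableEq (ColTL k i × Multiset (Finset (ColTL k i × Fin k))))

instance (k i : ℕ) : DecidableEq (ColTL k i) := colTLDecEq k i

def lWL {V : Type} [Fintype V] [DecidableEq V] (G : SimpleGraph V) [DecidableRel G.Adj] {k : ℕ} :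
    (i : ℕ) → (Fin k → V) → ColTL k i
  | 0, v => atp G v
  | i+1, v => (lWL G i v,
      (Finset.univ.val : Multiset V).map (fun w =>
        (Finset.univ.filter (fun j : Fin k => G.Adj (v j) w)).image
          (fun j => (lWL G i (Function.update v j w), j))))

/-- Color domain of the 1-WL variant `C^{1,*}` on the `k`-tuple graph. -/
def SColT (k : ℕ) : ℕ → Type
  | 0 => Base k
  | i+1 => SColT k i × Multiset (Finset (SColT k i × Fin k × Bool))

def sColTDecEq (k : ℕ) : (i : ℕ) → DecidableEq (SColT k i)
  | 0 => inferInstanceAs (DecidableEq (Base k))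
  | i+1 => letI := sColTDecEq k i
           inferInstanceAs (DecidableEq (SColT k i × Multiset (Finset (SColT k i × Fin k × Bool))))

instance (k i : ℕ) : DecidableEq (SColT k i) := sColTDecEq k i

def starWL {V : Type} [Fintype V] [DecidableEq V] (G : SimpleGraph V) [DecidableRel G.Adj] {k : ℕ} :
    (i : ℕ) → (Fin k → V) → SColT k i
  | 0, s => atp G s
  | i+1, s => (starWL G i s,
      (Finset.univ.val : Multiset V).map (fun w =>
        Finset.univ.image (fun j : Fin k =>
          (starWL G i (Function.update s j w), j, decide (G.Adj (s j) w)))))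

/-- Canonical encoding of the depth-`i` unrolled tree of the (global) `k`-tuple graph. -/
def UT (V : Type) (k : ℕ) : ℕ → Type
  | 0 => Base k
  | i+1 => Base k × Multiset ((Fin k × Bool × V) × UT V k i)

def unrollT {V : Type} [Fintype V] [DecidableEq V] (G : SimpleGraph V) [DecidableRel G.Adj] {k : ℕ} :
    (i : ℕ) → (Fin k → V) → UT V k i
  | 0, s => atp G s
  | i+1, s => (atp G s,
      (Finset.univ.val : Multiset (Fin k × V)).map (fun p =>
        ((p.1, decide (G.Adj (s p.1) p.2), p.2), unrollT G i (Function.update s p.1 p.2))))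

def truncUT {V : Type} {k : ℕ} : (i : ℕ) → UT V k (i+1) → UT V k i
  | 0, t => t.1
  | i+1, t => (t.1, t.2.map (fun p => (p.1, truncUT i p.2)))

def rootcol {V : Type} [Fintype V] [DecidableEq V] {k : ℕ} : (i : ℕ) → UT V k i → SColT k i
  | 0, t => t
  | i+1, t =>
    (rootcol i (truncUT i t),
     (Finset.univ.val : Multiset V).map (fun w =>
       ((t.2.filter (fun p => p.1.2.2 = w)).map (fun p => (rootcol i p.2, p.1.1, p.1.2.1))).toFinset))

/-- Canonical encoding of the depth-`i` unrolled tree of the local `k`-tuple graph. -/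
def UTL (V : Type) (k : ℕ) : ℕ → Type
  | 0 => Base k
  | i+1 => Base k × Multiset ((Fin k × V) × UTL V k i)

def unrollTL {V : Type} [Fintype V] [DecidableEq V] (G : SimpleGraph V) [DecidableRel G.Adj] {k : ℕ} :
    (i : ℕ) → (Fin k → V) → UTL V k i
  | 0, s => atp G s
  | i+1, s => (atp G s,
      ((Finset.univ.filter (fun p : Fin k × V => G.Adj (s p.1) p.2)).val).map (fun p =>
        (p, unrollTL G i (Function.update s p.1 p.2))))

/-- Color domain of the 1-WL (with labels in `L`) at iteration `i`. -/
def Col1 (L : Type) : ℕ → Type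
  | 0 => L
  | i+1 => Col1 L i × Multiset (Col1 L i)

def oneWL {V : Type} [Fintype V] [DecidableEq V] (G : SimpleGraph V) [DecidableRel G.Adj]
    {L : Type} (l : V → L) : (i : ℕ) → V → Col1 L i
  | 0, v => l v
  | i+1, v => (oneWL G l i v, (G.neighborFinset v).val.map (oneWL G l i))

/-- Canonical encoding of finite rooted directed labeled trees of depth at most `d`. -/
def LTr (L : Type) : ℕ → Type
  | 0 => L
  | d+1 => L × Multiset (LTr L d)

def labelOf {L : Type} : (d : ℕ) → LTr L d → L
  | 0, t => t
  | _+1, t => t.1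

def truncLT {L : Type} : (d i : ℕ) → LTr L d → LTr L i
  | d, 0, t => labelOf d t
  | 0, i+1, t => (t, 0)
  | d+1, i+1, t => (t.1, t.2.map (truncLT d i))

def rc {L : Type} : (d i : ℕ) → LTr L d → Col1 L i
  | d, 0, t => labelOf d t
  | 0, i+1, t => (rc 0 i t, 0)
  | d+1, i+1, t => (rc (d+1) i t, t.2.map (rc d i))

/-- δ-1-WL color domain. -/
def ColD : ℕ → Type
  | 0 => Unit
  | i+1 => ColD i × Multiset (ColD i × Bool)

def d1WL {V : Type} [Fintype V] [DecidableEq V] (G : SimpleGraph V) [DecidableRel G.Adj] :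
    (i : ℕ) → V → ColD i
  | 0, _ => ()
  | i+1, v => (d1WL G i v,
      (Finset.univ.val : Multiset V).map (fun w => (d1WL G i w, decide (G.Adj v w))))

/-- Canonical encoding of the unlabeled depth-`i` unrolled tree around a vertex. -/
def U : ℕ → Type
  | 0 => Unit
  | i+1 => Multiset (U i)

def unroll {V : Type} [Fintype V] [DecidableEq V] (G : SimpleGraph V) [DecidableRel G.Adj] :
    (i : ℕ) → V → U i
  | 0, _ => ()
  | i+1, v => (G.neighborFinset v).val.map (unroll G i)

def Mi {V : Type} [Fintype V] [DecidableEq V] (G : SimpleGraph V) [DecidableRel G.Adj] {k : ℕ}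
    (i : ℕ) (v : Fin k → V) : Multiset (Fin k → ColT k i) :=
  (Finset.univ.val : Multiset V).map (fun w => fun j => kWL G i (Function.update v j w))

def Mdi {V : Type} [Fintype V] [DecidableEq V] (G : SimpleGraph V) [DecidableRel G.Adj] {k : ℕ}
    (i : ℕ) (v : Fin k → V) : Multiset (Fin k → ColTd k i × Bool) :=
  (Finset.univ.val : Multiset V).map (fun w => fun j =>
    (dkWL G i (Function.update v j w), decide (G.Adj (v j) w)))

def colTDecEq (k : ℕ) : (i : ℕ) → DecidableEq (ColT k i)
  | 0 => inferInstanceAs (DecidableEq (Base k))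
  | i+1 => letI := colTDecEq k i
           inferInstanceAs (DecidableEq (ColT k i × Multiset (Fin k → ColT k i)))

instance (k i : ℕ) : DecidableEq (ColT k i) := colTDecEq k i

def colTdDecEq (k : ℕ) : (i : ℕ) → DecidableEq (ColTd k i)
  | 0 => inferInstanceAs (DecidableEq (Base k))
  | i+1 => letI := colTdDecEq k i
           inferInstanceAs (DecidableEq (ColTd k i × Multiset (Fin k → ColTd k i × Bool)))

instance (k i : ℕ) : DecidableEq (ColTd k i) := colTdDecEq k i

/-- Forgetting the adjacency flags: projection from δ-k-WL colors to k-WL colors. -/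
def projC (k : ℕ) : (i : ℕ) → ColTd k i → ColT k i
  | 0, c => c
  | i+1, c => (projC k i c.1, c.2.map (fun g j => projC k i (g j).1))

lemma projC_dkWL {V : Type} [Fintype V] [DecidableEq V] (G : SimpleGraph V) [DecidableRel G.Adj]
    {k : ℕ} : ∀ (i : ℕ) (v : Fin k → V), projC k i (dkWL G i v) = kWL G i v
  | 0, _ => rfl
  | i+1, v => by
    rw [projC, dkWL, kWL]
    refine Prod.ext (projC_dkWL G i v) ?_
    simp only [Multiset.map_map, Function.comp]
    refine Multiset.map_congr rfl fun w _ => ?_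
    funext j
    exact projC_dkWL G i _

lemma ncard_eq {α : Type} [Fintype α] (p : α → Prop) [DecidablePred p] :
    Nat.card {x // p x} = (Finset.univ.filter p).card := by
  rw [Nat.card_eq_fintype_card, Fintype.card_subtype]

lemma card_split {V : Type} [Fintype V] [DecidableEq V] (G : SimpleGraph V) [DecidableRel G.Adj]
    {k : ℕ} (i : ℕ) (c : ColT k i) (T : Finset (ColTd k i))
    (hmem : ∀ v : Fin k → V, kWL G i v = c → dkWL G i v ∈ T)
    (hproj : ∀ d ∈ T, projC k i d = c) :
    (Finset.univ.filter fun v : Fin k → V => kWL G i v = c).card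
      = ∑ d ∈ T, (Finset.univ.filter fun v : Fin k → V => dkWL G i v = d).card := by
  rw [Finset.card_eq_sum_card_fiberwise (f := dkWL G i) (t := T)
      (fun v hv => hmem v (by simpa using hv))]
  refine Finset.sum_congr rfl fun d hd => ?_
  congr 1
  ext v
  simp only [Finset.mem_filter, Finset.mem_univ, true_and]
  constructor
  · rintro ⟨_, h⟩; exact h
  · intro h
    exact ⟨by rw [← projC_dkWL G i v, h]; exact hproj d hd, h⟩

/-- δ-k-WL refines k-WL at every iteration; consequently δ-k-WL
distinguishes every pair of non-isomorphic graphs that k-WL distinguishes. -/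
theorem stmt0 {V W : Type} [Fintype V] [DecidableEq V] [Fintype W] [DecidableEq W]
    (G : SimpleGraph V) [DecidableRel G.Adj] (H : SimpleGraph W) [DecidableRel H.Adj]
    (k : ℕ) (hk : 2 ≤ k) :
    (∀ (i : ℕ) (s t : Fin k → V), dkWL G i s = dkWL G i t → kWL G i s = kWL G i t) ∧
    ((∃ (i : ℕ) (c : ColT k i),
        Nat.card {v : Fin k → V // kWL G i v = c} ≠ Nat.card {w : Fin k → W // kWL H i w = c}) →
      (∃ (i : ℕ) (c : ColTd k i),
        Nat.card {v : Fin k → V // dkWL G i v = c} ≠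
          Nat.card {w : Fin k → W // dkWL H i w = c})) := by
  constructor
  · intro i s t h
    rw [← projC_dkWL G i s, ← projC_dkWL G i t, h]
  · intro h
    by_contra hδ
    push_neg at hδ
    obtain ⟨i, c, hc⟩ := h
    apply hc
    set T : Finset (ColTd k i) :=
      ((Finset.univ.image (dkWL G i)) ∪ (Finset.univ.image (dkWL H i))).filter
        (fun d => projC k i d = c) with hT
    have hprojT : ∀ d ∈ T, projC k i d = c := fun d hd => (Finset.mem_filter.mp hd).2
    rw [ncard_eq, ncard_eq,
      card_split G i c T
        (fun v hv => Finset.mem_filter.mpr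
          ⟨Finset.mem_union_left _ (Finset.mem_image_of_mem _ (Finset.mem_univ v)),
           by rw [projC_dkWL G i v]; exact hv⟩) hprojT,
      card_split H i c T
        (fun w hw => Finset.mem_filter.mpr
          ⟨Finset.mem_union_right _ (Finset.mem_image_of_mem _ (Finset.mem_univ w)),
           by rw [projC_dkWL H i w]; exact hw⟩) hprojT]
    refine Finset.sum_congr rfl fun d _ => ?_
    have := hδ i d
    rwa [ncard_eq, ncard_eq] at this
end

section
/- The 1-WL distinguishes any two non-isomorphic finite rooted directed labeled trees: if T and T' are finite directed labeled trees rooted at r and r' respectively, and the stable 1-WL colors of r in T and r' in T' agree (running 1-WL in parallel on both trees using out-neighborhoods), then T and T' are isomorphic as rooted labeled trees. -/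
def lab {L : Type} : (i : ℕ) → Col1 L i → L
  | 0, c => c
  | i+1, c => lab i c.1

theorem lab_rc {L : Type} : ∀ (d i : ℕ) (t : LTr L d), lab i (rc d i t) = labelOf d t
  | 0, 0, _ => rfl
  | _+1, 0, _ => rfl
  | 0, i+1, t => by simp [rc, lab, lab_rc 0 i t]
  | d+1, i+1, t => by simp [rc, lab, lab_rc (d+1) i t]

theorem rc_inj {L : Type} : ∀ (d i : ℕ), d ≤ i →
    Function.Injective (rc (L := L) d i)
  | 0, 0, _ => fun t t' h => h
  | 0, i+1, _ => fun t t' h => by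
      have := congrArg (lab (i+1)) h
      simp [lab_rc, labelOf] at this
      exact this
  | d+1, i+1, hdi => fun t t' h => by
      have h1 : t.1 = t'.1 := by
        have := congrArg (lab (i+1)) h
        simpa [lab_rc, labelOf] using this
      have h2 : t.2.map (rc d i) = t'.2.map (rc d i) := (Prod.mk.injEq _ _ _ _ ▸ h).2
      have h2' : t.2 = t'.2 :=
        Multiset.map_injective (rc_inj d i (Nat.lt_succ_iff.mp hdi)) h2
      exact Prod.ext h1 h2'

/-- the 1-WL distinguishes any two non-isomorphic finite rooted directed labeled
trees (trees of depth at most `d` are canonically encoded in `LTr L d`, so that equality is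
rooted labeled tree isomorphism; `rc d i` is the 1-WL color of the root at iteration `i`). -/
theorem stmt5 {L : Type} (d i : ℕ) (hdi : d ≤ i) (t t' : LTr L d)
    (h : rc d i t = rc d i t') : t = t' :=
  rc_inj d i hdi h
end

section
/- Let G be a finite graph and let T^k(G) be its k-tuple graph. Then for all k-tuples s, t ∈ V(G)^k and all i ≥ 0, the δ-k-WL colors satisfy C^{k,δ,δ̄}_i(s) = C^{k,δ,δ̄}_i(t) if and only if C^{1,*}_i(v_s) = C^{1,*}_i(v_t), where C^{1,*} is the 1-WL variant on T^k(G) that refines a vertex's color by the multiset, over exchanged vertices w ∈ V(G), of the sets {(C^{1,*}_i(v_u), j, flag) : edge (v_t,v_u) has exchanged vertex w and label (j, flag)}. -/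
lemma kernel_map_eq {α β γ : Type*} [DecidableEq β] [DecidableEq γ]
    (m m' : Multiset α) (f : α → β) (g : α → γ)
    (h : ∀ x ∈ m + m', ∀ y ∈ m + m', (f x = f y ↔ g x = g y))
    (hf : m.map f = m'.map f) : m.map g = m'.map g := by
  ext c
  rw [Multiset.count_map, Multiset.count_map]
  by_cases hc : ∃ x ∈ m + m', g x = c
  · obtain ⟨x₀, hx₀, hgx₀⟩ := hc
    have key : ∀ (n : Multiset α), (∀ y ∈ n, y ∈ m + m') →
        Multiset.card (n.filter (fun a => c = g a))
          = Multiset.card (n.filter (fun a => f x₀ = f a)) := by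
      intro n hn
      congr 1
      apply Multiset.filter_congr
      intro y hy
      constructor
      · intro hcy
        exact (h x₀ hx₀ y (hn y hy)).mpr (hgx₀.trans hcy)
      · intro hfy
        exact hgx₀.symm.trans ((h x₀ hx₀ y (hn y hy)).mp hfy)
    have h1 := key m (fun y hy => Multiset.mem_add.mpr (Or.inl hy))
    have h2 := key m' (fun y hy => Multiset.mem_add.mpr (Or.inr hy))
    rw [h1, h2]
    rw [← Multiset.count_map f m (f x₀), ← Multiset.count_map f m' (f x₀), hf]
  · push_neg at hc
    have e1 : m.filter (fun a => c = g a) = 0 :=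
      Multiset.filter_eq_nil.mpr (fun y hy hcy => hc y (Multiset.mem_add.mpr (Or.inl hy)) hcy.symm)
    have e2 : m'.filter (fun a => c = g a) = 0 :=
      Multiset.filter_eq_nil.mpr (fun y hy hcy => hc y (Multiset.mem_add.mpr (Or.inr hy)) hcy.symm)
    rw [e1, e2]

lemma pair_map_eq {α β γ : Type*} [DecidableEq β] [DecidableEq γ] (m : Multiset α)
    (f f' : α → β) (g g' : α → γ)
    (hll : ∀ x y, f x = f y ↔ g x = g y)
    (hrr : ∀ x y, f' x = f' y ↔ g' x = g' y)
    (hlr : ∀ x y, f x = f' y ↔ g x = g' y)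
    (hf : m.map f = m.map f') : m.map g = m.map g' := by
  have main := kernel_map_eq (m.map Sum.inl) (m.map Sum.inr)
      (Sum.elim f f') (Sum.elim g g') ?_ ?_
  · rwa [Multiset.map_map, Multiset.map_map] at main
  · rintro (x|x) - (y|y) - <;> simp only [Sum.elim_inl, Sum.elim_inr]
    · exact hll x y
    · exact hlr x y
    · constructor
      · intro h; exact ((hlr y x).mp h.symm).symm
      · intro h; exact ((hlr y x).mpr h.symm).symm
    · exact hrr x y
  · rwa [Multiset.map_map, Multiset.map_map]

/-- the δ-k-WL on tuples is equivalent to the 1-WL variant `C^{1,*}`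
on the k-tuple graph. -/
theorem stmt7 {V : Type} [Fintype V] [DecidableEq V]
    (G : SimpleGraph V) [DecidableRel G.Adj] (k : ℕ) :
    ∀ (i : ℕ) (s t : Fin k → V), dkWL G i s = dkWL G i t ↔ starWL G i s = starWL G i t := by
  classical
  intro i
  induction i with
  | zero =>
    intro s t
    simp only [dkWL, starWL]
    exact Iff.rfl
  | succ i ih =>
    intro s t
    have key : ∀ (s t : Fin k → V) (w w' : V),
        ((fun j => (dkWL G i (Function.update s j w), decide (G.Adj (s j) w)))
          = fun j => (dkWL G i (Function.update t j w'), decide (G.Adj (t j) w'))) ↔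
        (Finset.univ.image (fun j : Fin k =>
            (starWL G i (Function.update s j w), j, decide (G.Adj (s j) w)))
          = Finset.univ.image (fun j : Fin k =>
            (starWL G i (Function.update t j w'), j, decide (G.Adj (t j) w')))) := by
      intro s t w w'
      constructor
      · intro hfun
        have hpt : (fun j : Fin k =>
            (starWL G i (Function.update s j w), j, decide (G.Adj (s j) w)))
            = fun j : Fin k =>
            (starWL G i (Function.update t j w'), j, decide (G.Adj (t j) w')) := by
          funext j
          have h := congrFun hfun j
          have h1 : dkWL G i (Function.update s j w) = dkWL G i (Function.update t j w') :=
            congrArg Prod.fst h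
          have h2 : decide (G.Adj (s j) w) = decide (G.Adj (t j) w') :=
            congrArg Prod.snd h
          rw [(ih _ _).mp h1, h2]
        rw [hpt]
      · intro himg
        funext j
        have hmem : (starWL G i (Function.update s j w), j, decide (G.Adj (s j) w)) ∈
            Finset.univ.image (fun j : Fin k =>
              (starWL G i (Function.update t j w'), j, decide (G.Adj (t j) w'))) := by
          rw [← himg]
          exact Finset.mem_image_of_mem _ (Finset.mem_univ j)
        obtain ⟨j', -, hj'⟩ := Finset.mem_image.mp hmem
        have hjj : j' = j := congrArg (fun p : SColT k i × Fin k × Bool => p.2.1) hj'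
        subst hjj
        have hstar : starWL G i (Function.update t j' w') = starWL G i (Function.update s j' w) :=
          congrArg Prod.fst hj'
        have hb : decide (G.Adj (t j') w') = decide (G.Adj (s j') w) :=
          congrArg (fun p : SColT k i × Fin k × Bool => p.2.2) hj'
        exact Prod.ext ((ih _ _).mpr hstar.symm) hb.symm
    simp only [dkWL, starWL]
    constructor
    · intro h
      have h1 : dkWL G i s = dkWL G i t := congrArg Prod.fst h
      have h2 := congrArg Prod.snd h
      refine Prod.ext ((ih s t).mp h1) ?_
      exact pair_map_eq (Finset.univ.val : Multiset V) _ _ _ _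
        (fun x y => key s s x y) (fun x y => key t t x y) (fun x y => key s t x y) h2
    · intro h
      have h1 : starWL G i s = starWL G i t := congrArg Prod.fst h
      have h2 := congrArg Prod.snd h
      refine Prod.ext ((ih s t).mpr h1) ?_
      exact pair_map_eq (Finset.univ.val : Multiset V) _ _ _ _
        (fun x y => (key s s x y).symm) (fun x y => (key t t x y).symm)
        (fun x y => (key s t x y).symm) h2
end

section
/- For k = 1, the δ-variant and the classical Weisfeiler-Leman algorithm induce the same partitions: for every finite graph G, every i ≥ 0 and all vertices u, v, the classical 1-WL colors of u and v at iteration i agree if and only if their δ-1-WL colors (which record, for each vertex w, the color of w together with the flag of whether w is adjacent) at iteration i agree. -/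
def col1DecEq {L : Type} [DecidableEq L] : (i : ℕ) → DecidableEq (Col1 L i)
  | 0 => inferInstanceAs (DecidableEq L)
  | i+1 => letI := col1DecEq (L := L) i
           inferInstanceAs (DecidableEq (Col1 L i × Multiset (Col1 L i)))

instance {L : Type} [DecidableEq L] (i : ℕ) : DecidableEq (Col1 L i) := col1DecEq i

def colDDecEq : (i : ℕ) → DecidableEq (ColD i)
  | 0 => inferInstanceAs (DecidableEq Unit)
  | i+1 => letI := colDDecEq i
           inferInstanceAs (DecidableEq (ColD i × Multiset (ColD i × Bool)))

instance (i : ℕ) : DecidableEq (ColD i) := colDDecEq i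

lemma cardf_congr {α : Type} {s : Multiset α} {p q : α → Prop}
    [DecidablePred p] [DecidablePred q] (h : ∀ x ∈ s, p x ↔ q x) :
    (s.filter p).card = (s.filter q).card :=
  congrArg _ (Multiset.filter_congr h)

/-- If two colorings `f`, `g` induce the same partition, then equality of all
adjacency-restricted class counts transfers from `f` to `g`. -/
lemma count_transfer {V α β : Type} [Fintype V] [DecidableEq α] [DecidableEq β]
    (f : V → α) (g : V → β) (hfg : ∀ a b : V, f a = f b ↔ g a = g b)
    (p q : V → Prop) [DecidablePred p] [DecidablePred q]
    (h : ∀ y, Multiset.card ((Finset.univ.val : Multiset V).filter (fun w => f w = y ∧ p w))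
            = Multiset.card ((Finset.univ.val : Multiset V).filter (fun w => f w = y ∧ q w)))
    (x : β) :
    Multiset.card ((Finset.univ.val : Multiset V).filter (fun w => g w = x ∧ p w))
      = Multiset.card ((Finset.univ.val : Multiset V).filter (fun w => g w = x ∧ q w)) := by
  by_cases hx : ∃ w0 : V, g w0 = x
  · obtain ⟨w0, hw0⟩ := hx
    have e1 : ∀ (w : V), (g w = x) ↔ (f w = f w0) := by
      intro w; rw [← hw0, ← hfg]
    calc Multiset.card ((Finset.univ.val : Multiset V).filter (fun w => g w = x ∧ p w))
        = Multiset.card ((Finset.univ.val : Multiset V).filter (fun w => f w = f w0 ∧ p w)) :=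
          cardf_congr (fun w _ => and_congr_left' (e1 w))
      _ = Multiset.card ((Finset.univ.val : Multiset V).filter (fun w => f w = f w0 ∧ q w)) :=
          h (f w0)
      _ = Multiset.card ((Finset.univ.val : Multiset V).filter (fun w => g w = x ∧ q w)) :=
          (cardf_congr (fun w _ => and_congr_left' (e1 w))).symm
  · push_neg at hx
    have e : ∀ (r : V → Prop) [DecidablePred r],
        (Finset.univ.val : Multiset V).filter (fun w => g w = x ∧ r w) = 0 := by
      intro r _
      rw [Multiset.filter_eq_nil]
      intro w _ hw; exact hx w hw.1
    rw [e p, e q]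

lemma cnt_map {V α : Type} [Fintype V] [DecidableEq α] (F : V → α) (a : α) :
    Multiset.count a ((Finset.univ.val : Multiset V).map F)
      = Multiset.card ((Finset.univ.val : Multiset V).filter (fun w => F w = a)) := by
  rw [Multiset.count_map]
  exact cardf_congr (fun w _ => eq_comm)

lemma nbr_val {V : Type} [Fintype V] [DecidableEq V] (G : SimpleGraph V) [DecidableRel G.Adj]
    (u : V) : (G.neighborFinset u).val
      = (Finset.univ.val : Multiset V).filter (fun w => G.Adj u w) := by
  rw [← Finset.filter_val]
  congr 1
  ext w
  simp [SimpleGraph.mem_neighborFinset]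

/-- split the class count into adjacent and non-adjacent parts -/
lemma cnt_split {V α : Type} [Fintype V] [DecidableEq α]
    (d : V → α) (x : α) (p : V → Prop) [DecidablePred p] :
    Multiset.card ((Finset.univ.val : Multiset V).filter (fun w => d w = x ∧ p w))
      + Multiset.card ((Finset.univ.val : Multiset V).filter (fun w => d w = x ∧ ¬ p w))
      = Multiset.card ((Finset.univ.val : Multiset V).filter (fun w => d w = x)) := by
  have h1 : ∀ (q : V → Prop) [DecidablePred q],
      Multiset.card ((Finset.univ.val : Multiset V).filter (fun w => d w = x ∧ q w))
        = Multiset.card ((((Finset.univ.val : Multiset V)).filter (fun w => d w = x)).filter q) := by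
    intro q _
    rw [Multiset.filter_filter]
    exact cardf_congr (fun w _ => and_comm)
  rw [h1 p, h1 (fun w => ¬ p w), ← Multiset.card_add, Multiset.filter_add_not]

lemma cnt_nbr {V α : Type} [Fintype V] [DecidableEq V] [DecidableEq α]
    (G : SimpleGraph V) [DecidableRel G.Adj] (c : V → α) (u : V) (y : α) :
    Multiset.count y (((G.neighborFinset u).val).map c)
      = Multiset.card ((Finset.univ.val : Multiset V).filter (fun w => c w = y ∧ G.Adj u w)) := by
  rw [nbr_val, Multiset.count_map, Multiset.filter_filter]
  exact cardf_congr (fun w _ => and_congr_left' eq_comm)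

lemma cnt_pair {V α : Type} [Fintype V] [DecidableEq V] [DecidableEq α]
    (d : V → α) (p : V → Prop) [DecidablePred p] (x : α) (b : Bool) :
    Multiset.count (x, b)
        ((Finset.univ.val : Multiset V).map (fun w => (d w, decide (p w))))
      = Multiset.card ((Finset.univ.val : Multiset V).filter
          (fun w => d w = x ∧ (p w ↔ b = true))) := by
  rw [cnt_map]
  apply cardf_congr
  intro w _
  constructor
  · intro h
    have h1 := congrArg Prod.fst h
    have h2 := congrArg Prod.snd h
    simp at h1 h2
    exact ⟨h1, by simp [← h2]⟩
  · rintro ⟨h1, h2⟩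
    have : decide (p w) = b := by
      cases b
      · simp [h2]
      · simp [h2]
    simp [h1, this]

/-- for `k = 1`, the δ-variant and the classical Weisfeiler-Leman algorithm
induce the same partitions at every iteration. -/
theorem stmt15 {V : Type} [Fintype V] [DecidableEq V]
    (G : SimpleGraph V) [DecidableRel G.Adj] :
    ∀ (i : ℕ) (u v : V),
      oneWL G (fun _ => ()) i u = oneWL G (fun _ => ()) i v ↔ d1WL G i u = d1WL G i v := by
  intro i
  induction i with
  | zero => intro u v; constructor <;> intro _ <;> rfl
  | succ i ih =>
    intro u v
    set c := oneWL (V := V) G (fun _ => ()) i with hcdef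
    set d := d1WL (V := V) G i with hddef
    show (c u, (G.neighborFinset u).val.map c) = (c v, (G.neighborFinset v).val.map c)
      ↔ (d u, (Finset.univ.val : Multiset V).map (fun w => (d w, decide (G.Adj u w))))
        = (d v, (Finset.univ.val : Multiset V).map (fun w => (d w, decide (G.Adj v w))))
    rw [Prod.mk.injEq, Prod.mk.injEq]
    constructor
    · rintro ⟨h1, h2⟩
      refine ⟨(ih u v).mp h1, ?_⟩
      have hcc : ∀ y, Multiset.card ((Finset.univ.val : Multiset V).filter
            (fun w => c w = y ∧ G.Adj u w))
          = Multiset.card ((Finset.univ.val : Multiset V).filter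
            (fun w => c w = y ∧ G.Adj v w)) := by
        intro y
        have h3 := congrArg (Multiset.count y) h2
        rwa [cnt_nbr, cnt_nbr] at h3
      have hdd : ∀ x, Multiset.card ((Finset.univ.val : Multiset V).filter
            (fun w => d w = x ∧ G.Adj u w))
          = Multiset.card ((Finset.univ.val : Multiset V).filter
            (fun w => d w = x ∧ G.Adj v w)) :=
        fun x => count_transfer c d ih (G.Adj u) (G.Adj v) hcc x
      have hdd' : ∀ x, Multiset.card ((Finset.univ.val : Multiset V).filter
            (fun w => d w = x ∧ ¬ G.Adj u w))
          = Multiset.card ((Finset.univ.val : Multiset V).filter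
            (fun w => d w = x ∧ ¬ G.Adj v w)) := by
        intro x
        have h3 := cnt_split d x (G.Adj u)
        have h4 := cnt_split d x (G.Adj v)
        have h5 := hdd x
        omega
      apply Multiset.ext.mpr
      rintro ⟨x, b⟩
      rw [cnt_pair, cnt_pair]
      cases b with
      | true =>
        calc Multiset.card ((Finset.univ.val : Multiset V).filter
              (fun w => d w = x ∧ (G.Adj u w ↔ true = true)))
            = Multiset.card ((Finset.univ.val : Multiset V).filter
              (fun w => d w = x ∧ G.Adj u w)) :=
              cardf_congr (fun w _ => by simp)
          _ = Multiset.card ((Finset.univ.val : Multiset V).filter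
              (fun w => d w = x ∧ G.Adj v w)) := hdd x
          _ = Multiset.card ((Finset.univ.val : Multiset V).filter
              (fun w => d w = x ∧ (G.Adj v w ↔ true = true))) :=
              (cardf_congr (fun w _ => by simp)).symm
      | false =>
        calc Multiset.card ((Finset.univ.val : Multiset V).filter
              (fun w => d w = x ∧ (G.Adj u w ↔ false = true)))
            = Multiset.card ((Finset.univ.val : Multiset V).filter
              (fun w => d w = x ∧ ¬ G.Adj u w)) :=
              cardf_congr (fun w _ => by simp)
          _ = Multiset.card ((Finset.univ.val : Multiset V).filter
              (fun w => d w = x ∧ ¬ G.Adj v w)) := hdd' x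
          _ = Multiset.card ((Finset.univ.val : Multiset V).filter
              (fun w => d w = x ∧ (G.Adj v w ↔ false = true))) :=
              (cardf_congr (fun w _ => by simp)).symm
    · rintro ⟨h1, h2⟩
      refine ⟨(ih u v).mpr h1, ?_⟩
      have hdd : ∀ x, Multiset.card ((Finset.univ.val : Multiset V).filter
            (fun w => d w = x ∧ G.Adj u w))
          = Multiset.card ((Finset.univ.val : Multiset V).filter
            (fun w => d w = x ∧ G.Adj v w)) := by
        intro x
        have h3 := congrArg (Multiset.count (x, true)) h2
        rw [cnt_pair, cnt_pair] at h3
        calc Multiset.card ((Finset.univ.val : Multiset V).filter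
              (fun w => d w = x ∧ G.Adj u w))
            = Multiset.card ((Finset.univ.val : Multiset V).filter
              (fun w => d w = x ∧ (G.Adj u w ↔ true = true))) :=
              cardf_congr (fun w _ => by simp)
          _ = Multiset.card ((Finset.univ.val : Multiset V).filter
              (fun w => d w = x ∧ (G.Adj v w ↔ true = true))) := h3
          _ = Multiset.card ((Finset.univ.val : Multiset V).filter
              (fun w => d w = x ∧ G.Adj v w)) :=
              cardf_congr (fun w _ => by simp)
      have hcc := fun y =>
        count_transfer d c (fun a b => (ih a b).symm) (G.Adj u) (G.Adj v) hdd y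
      apply Multiset.ext.mpr
      intro y
      rw [cnt_nbr, cnt_nbr]
      exact hcc y
end

section
/- For every finite graph G, the 1-WL color of a vertex at iteration i is determined by the isomorphism type of the depth-i unrolled tree: for vertices u, v ∈ V(G), C^1_i(u) = C^1_i(v) if and only if the unrolled trees U^i_{G,u} and U^i_{G,v} are isomorphic as rooted trees (mapping root to root). -/
def gU : (i : ℕ) → Col1 Unit i → U i
  | 0, _ => ()
  | i+1, c => c.2.map (gU i)

def truncU : (i : ℕ) → U (i+1) → U i
  | 0, _ => ()
  | i+1, t => t.map (truncU i)

def hU : (i : ℕ) → U i → Col1 Unit i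
  | 0, _ => ()
  | i+1, t => (hU i (truncU i t), t.map (hU i))

lemma truncU_unroll {V : Type} [Fintype V] [DecidableEq V]
    (G : SimpleGraph V) [DecidableRel G.Adj] :
    ∀ (i : ℕ) (v : V), truncU i (unroll G (i+1) v) = unroll G i v := by
  intro i
  induction i with
  | zero => intro v; rfl
  | succ i ih =>
      intro v
      simp only [truncU, unroll, Multiset.map_map, Function.comp]
      exact (Multiset.map_map _ _ _).trans (Multiset.map_congr rfl (fun w _ => ih w))

lemma gU_spec {V : Type} [Fintype V] [DecidableEq V]
    (G : SimpleGraph V) [DecidableRel G.Adj] :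
    ∀ (i : ℕ) (v : V), gU i (oneWL G (fun _ => ()) i v) = unroll G i v := by
  intro i
  induction i with
  | zero => intro v; rfl
  | succ i ih =>
      intro v
      simp only [gU, oneWL, unroll, Multiset.map_map, Function.comp]
      exact Multiset.map_congr rfl (fun w _ => ih w)

lemma hU_spec {V : Type} [Fintype V] [DecidableEq V]
    (G : SimpleGraph V) [DecidableRel G.Adj] :
    ∀ (i : ℕ) (v : V), hU i (unroll G i v) = oneWL G (fun _ => ()) i v := by
  intro i
  induction i with
  | zero => intro v; rfl
  | succ i ih =>
      intro v
      simp only [hU, oneWL, unroll, Multiset.map_map, Function.comp]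
      have ht : truncU i (Multiset.map (unroll G i) (G.neighborFinset v).val) = unroll G i v :=
        truncU_unroll G i v
      rw [ht, ih v]
      exact Prod.ext rfl (Multiset.map_congr rfl (fun w _ => ih w))

/-- the 1-WL color of a vertex at iteration `i` is determined by the depth-`i`
unrolled tree around it (canonical multiset encoding: equality of encodings is rooted tree
isomorphism). -/
theorem stmt19 {V : Type} [Fintype V] [DecidableEq V]
    (G : SimpleGraph V) [DecidableRel G.Adj] :
    ∀ (i : ℕ) (u v : V),
      oneWL G (fun _ => ()) i u = oneWL G (fun _ => ()) i v ↔ unroll G i u = unroll G i v := by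
  intro i u v
  constructor
  · intro h
    rw [← gU_spec G i u, ← gU_spec G i v, h]
  · intro h
    rw [← hU_spec G i u, ← hU_spec G i v, h]
end
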